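/- For all t, s ∈ [0,1], H(t,s) ≤ (1/k)·e(s), where H(t,s) = G(t,s) + (α/k)∫₀¹ G(τ,s) dτ + (1/k)Σᵢ βᵢ G(ηᵢ,s), k = 1 − (α + Σᵢ βᵢ) > 0, α ≥ 0, βᵢ ≥ 0, ηᵢ ∈ (0,1), and e(s) = (1/6)s(1−s)². -/
import Mathlib


open Set intervalIntegral Filter

noncomputable def G (t s : ℝ) : ℝ :=
  if s ≤ t then (t^3*(1-s)^2 - (t-s)^3)/6 else t^3*(1-s)^2/6

noncomputable def e (s : ℝ) : ℝ := s*(1-s)^2/6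

noncomputable def H (α k : ℝ) {n : ℕ} (β η : Fin n → ℝ) (t s : ℝ) : ℝ :=
  G t s + (α/k) * (∫ τ in (0:ℝ)..1, G τ s) + (1/k) * ∑ i, β i * G (η i) s

lemma G_le_e (t s : ℝ) (ht : t ∈ Set.Icc (0:ℝ) 1) (hs : s ∈ Set.Icc (0:ℝ) 1) :
    G t s ≤ e s := by
  obtain ⟨ht0, ht1⟩ := ht
  obtain ⟨hs0, hs1⟩ := hs
  unfold G e
  split_ifs with h
  · have h1 : 0 ≤ 1 - t := by linarith
    have h2 : 0 ≤ t - s := by linarith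
    have key : s*(1-s)^2 - (t^3*(1-s)^2 - (t-s)^3)
        = s*(1-t)^2*((2-s)*t + 1-2*s) := by ring
    have h3 : 0 ≤ (2-s)*t + 1-2*s := by nlinarith [mul_nonneg h2 (by linarith : (0:ℝ) ≤ 2 - s)]
    have h4 : 0 ≤ s*(1-t)^2*((2-s)*t + 1-2*s) := by positivity
    linarith
  · push_neg at h
    have : t^3 ≤ s := by
      nlinarith [mul_nonneg (mul_nonneg ht0 (by linarith : (0:ℝ) ≤ 1 - t)) (by linarith : (0:ℝ) ≤ 1 + t)]
    nlinarith [sq_nonneg (1-s)]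

lemma G_cont (s : ℝ) : Continuous fun τ : ℝ => G τ s := by
  unfold G
  apply Continuous.if_le
  · continuity
  · continuity
  · exact continuous_const
  · exact continuous_id
  · intro x hx
    rw [← hx]
    ring

theorem stmt10 (n : ℕ) (α : ℝ) (β η : Fin n → ℝ)
    (hα : 0 ≤ α) (hβ : ∀ i, 0 ≤ β i)
    (hη : ∀ i, η i ∈ Set.Ioo (0:ℝ) 1)
    (k : ℝ) (hk : k = 1 - (α + ∑ i, β i)) (hk0 : 0 < k) :
    ∀ t ∈ Set.Icc (0:ℝ) 1, ∀ s ∈ Set.Icc (0:ℝ) 1,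
      H α k β η t s ≤ (1/k) * e s := by
  intro t ht s hs
  have hGle : ∀ τ ∈ Set.Icc (0:ℝ) 1, G τ s ≤ e s := fun τ hτ => G_le_e τ s hτ hs
  have hInt : (∫ τ in (0:ℝ)..1, G τ s) ≤ ∫ τ in (0:ℝ)..1, e s := by
    apply intervalIntegral.integral_mono_on (by norm_num)
    · exact (G_cont s).intervalIntegrable 0 1
    · exact intervalIntegrable_const
    · intro τ hτ; exact hGle τ hτ
  have hInt' : (∫ τ in (0:ℝ)..1, G τ s) ≤ e s := by
    simpa using hInt
  have hSum : ∑ i, β i * G (η i) s ≤ (∑ i, β i) * e s := by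
    rw [Finset.sum_mul]
    apply Finset.sum_le_sum
    intro i _
    exact mul_le_mul_of_nonneg_left
      (G_le_e (η i) s (Set.mem_Icc_of_Ioo (hη i)) hs) (hβ i)
  have hαk : 0 ≤ α / k := div_nonneg hα hk0.le
  have hk1 : 0 ≤ 1 / k := by positivity
  have h1 : H α k β η t s ≤ e s + (α/k) * e s + (1/k) * ((∑ i, β i) * e s) := by
    unfold H
    gcongr
    exact G_le_e t s ht hs
  have h2 : e s + (α/k) * e s + (1/k) * ((∑ i, β i) * e s) = (1/k) * e s := by
    have hsum : α + ∑ i, β i = 1 - k := by linarith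
    field_simp
    linear_combination e s * hsum
  linarith
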